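/- For the scalar density evolution of a regular degree-2 product code with row degree n, defined by x^{(0)} = 1 and x^{(ℓ+1)} = Ψ_{≥t}(p n x^{(ℓ)}), if p n < t / e (equivalently if Ψ_{≥t}(pn·x) < x for all x ∈ (0,1]), then x^{(ℓ)} → 0 as ℓ → ∞. -/
import Mathlib


open Real Finset Filter

/-- Scalar density evolution of a regular degree-2 product code: with
`Ψ_{≥t}(λ) = 1 - e^{-λ} ∑_{k<t} λ^k/k!`, `x⁰ = 1`, `x^{ℓ+1} = Ψ_{≥t}(p n x^ℓ)`,
the strict contraction condition `Ψ_{≥t}(p n y) < y` on `(0,1]` forces `x^ℓ → 0`. -/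
theorem scalar_DE_to_zero (t : ℕ) (ht : 1 ≤ t) (p : ℝ) (hp : 0 ≤ p) (n : ℕ)
    (Ψ : ℝ → ℝ)
    (hΨ : Ψ = fun lam => 1 - Real.exp (-lam) * ∑ k ∈ Finset.range t, lam ^ k / (Nat.factorial k))
    (x : ℕ → ℝ) (hx0 : x 0 = 1)
    (hrec : ∀ ℓ, x (ℓ + 1) = Ψ (p * n * x ℓ))
    (hcontract : ∀ y : ℝ, y ∈ Set.Ioc (0:ℝ) 1 → Ψ (p * n * y) < y) :
    Tendsto x atTop (nhds 0) := by
  have hpn : 0 ≤ p * n := by positivity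
  -- Ψ 0 = 0
  have hΨ0 : Ψ 0 = 0 := by
    subst hΨ
    simp only
    rw [Finset.sum_eq_single 0]
    · simp
    · intro k hk hk0
      simp [zero_pow hk0]
    · intro h; exact absurd (Finset.mem_range.mpr ht) h
  -- Ψ λ ∈ [0,1] for λ ≥ 0
  have hΨ01 : ∀ lam : ℝ, 0 ≤ lam → 0 ≤ Ψ lam ∧ Ψ lam ≤ 1 := by
    intro lam hlam
    subst hΨ
    constructor
    · simp only [sub_nonneg]
      calc Real.exp (-lam) * ∑ k ∈ Finset.range t, lam ^ k / (Nat.factorial k)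
          ≤ Real.exp (-lam) * Real.exp lam := by
            apply mul_le_mul_of_nonneg_left (Real.sum_le_exp_of_nonneg hlam t)
              (Real.exp_nonneg _)
        _ = 1 := by rw [← Real.exp_add]; simp
    · simp only
      have hS : 0 ≤ ∑ k ∈ Finset.range t, lam ^ k / (Nat.factorial k) := by
        apply Finset.sum_nonneg; intro k _; positivity
      nlinarith [Real.exp_nonneg (-lam)]
  -- x ℓ ∈ [0,1]
  have hx01 : ∀ ℓ, 0 ≤ x ℓ ∧ x ℓ ≤ 1 := by
    intro ℓ
    induction ℓ with
    | zero => simp [hx0]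
    | succ m ih =>
      rw [hrec]
      exact hΨ01 _ (by nlinarith [ih.1])
  -- antitone
  have hstep : ∀ ℓ, x (ℓ + 1) ≤ x ℓ := by
    intro ℓ
    rcases lt_or_eq_of_le (hx01 ℓ).1 with h | h
    · exact le_of_lt (by rw [hrec]; exact hcontract _ ⟨h, (hx01 ℓ).2⟩)
    · rw [hrec, ← h, mul_zero, hΨ0]
  have hanti : Antitone x := antitone_nat_of_succ_le hstep
  have hbdd : BddBelow (Set.range x) := ⟨0, by rintro _ ⟨ℓ, rfl⟩; exact (hx01 ℓ).1⟩
  set L := ⨅ ℓ, x ℓ with hL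
  have hlim : Tendsto x atTop (nhds L) := tendsto_atTop_ciInf hanti hbdd
  have hL0 : 0 ≤ L := le_ciInf fun ℓ => (hx01 ℓ).1
  have hL1 : L ≤ 1 := le_trans (ciInf_le hbdd 0) (le_of_eq hx0)
  -- L is a fixed point
  have hcont : Continuous Ψ := by subst hΨ; fun_prop
  have hlim2 : Tendsto (fun ℓ => x (ℓ + 1)) atTop (nhds L) :=
    hlim.comp (tendsto_add_atTop_nat 1)
  have hlim3 : Tendsto (fun ℓ => Ψ (p * n * x ℓ)) atTop (nhds (Ψ (p * n * L))) :=
    (hcont.tendsto _).comp (tendsto_const_nhds.mul hlim)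
  have hfix : Ψ (p * n * L) = L := by
    apply tendsto_nhds_unique _ hlim2
    simpa only [hrec] using hlim3
  have hLzero : L = 0 := by
    by_contra h
    have hLpos : 0 < L := lt_of_le_of_ne hL0 (Ne.symm h)
    exact absurd hfix (ne_of_lt (hcontract L ⟨hLpos, hL1⟩))
  rw [hLzero] at hlim
  exact hlim
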